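/- For α ∈ (0,1), let W(e^{−1}) solve x + 1 + ln x = 0 and set T_α = −ln(2^α − 1). Then for all α ∈ (0,1): T_α ≥ −ln α + ½(α+1)^{(α+1)/α} − (α+1) ≥ −ln(sin(πα/2)) + ½(α+1)^{(α+1)/α} − (α+1). -/

import Mathlib

open Real Set

namespace TAaux

noncomputable def E (x : ℝ) : ℝ := Real.exp (x * Real.log 2)
noncomputable def q (x : ℝ) : ℝ := (1 + 1/x) * Real.log (1+x)
noncomputable def q1 (x : ℝ) : ℝ := 1/x - Real.log (1+x)/x^2
noncomputable def q2 (x : ℝ) : ℝ := 2*Real.log (1+x)/x^3 - 1/x^2 - 1/(x^2*(1+x))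
noncomputable def q3 (x : ℝ) : ℝ :=
  -6*Real.log (1+x)/x^4 + 2/(x^3*(1+x)) + 2/x^3 + (2+3*x)/(x^3*(1+x)^2)
noncomputable def f (x : ℝ) : ℝ :=
  Real.log x - Real.log (E x - 1) - (1/2)*Real.exp (q x) + (x+1)
noncomputable def f1 (x : ℝ) : ℝ :=
  1/x - Real.log 2 * E x/(E x - 1) - (1/2)*Real.exp (q x)*q1 x + 1
noncomputable def f2 (x : ℝ) : ℝ :=
  -1/x^2 + (Real.log 2)^2 * E x/(E x - 1)^2 - (1/2)*Real.exp (q x)*(q1 x^2 + q2 x)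
noncomputable def f3 (x : ℝ) : ℝ :=
  2/x^3 - (Real.log 2)^3 * E x*(E x + 1)/(E x - 1)^3
    - (1/2)*Real.exp (q x)*(q1 x^3 + 3*q1 x*q2 x + q3 x)

lemma E_gt_one {x : ℝ} (hx : 0 < x) : 1 < E x := by
  have h : 0 < x * Real.log 2 := mul_pos hx (Real.log_pos (by norm_num))
  have h2 := Real.exp_lt_exp.mpr h
  rw [Real.exp_zero] at h2
  exact h2

lemma cube_le_cube {a b : ℝ} (h : a ≤ b) : a^3 ≤ b^3 := by
  nlinarith [sq_nonneg (a+b), sq_nonneg (a-b), sq_nonneg a, sq_nonneg b]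


lemma certA {u : ℝ} (hu : 0 ≤ u) (hu7 : u ≤ 7/10) :
    2*(u + u^2/2 + u^3/6 + u^4/24 + u^5/120 + 7*u^6/4320)^3
      - u^3*((1 + (u + u^2/2 + u^3/6 + u^4/24 + u^5/120))
              *(2 + (u + u^2/2 + u^3/6 + u^4/24 + u^5/120)))
      ≤ u^7/30 := by
  have hbb : (0:ℝ) ≤ 7/10 - u := by linarith
  have t0 : (0:ℝ) ≤ (2500000000/1977326743)*u^7*(7/10-u)^11 := (mul_nonneg (mul_nonneg (by norm_num : (0:ℝ) ≤ (2500000000/1977326743)) (pow_nonneg hu 7)) (pow_nonneg hbb 11))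
  have t1 : (0:ℝ) ≤ (238750000000/17795940687)*u^8*(7/10-u)^10 := (mul_nonneg (mul_nonneg (by norm_num : (0:ℝ) ≤ (238750000000/17795940687)) (pow_nonneg hu 8)) (pow_nonneg hbb 10))
  have t2 : (0:ℝ) ≤ (3431318750000/53387822061)*u^9*(7/10-u)^9 := (mul_nonneg (mul_nonneg (by norm_num : (0:ℝ) ≤ (3431318750000/53387822061)) (pow_nonneg hu 9)) (pow_nonneg hbb 9))
  have t3 : (0:ℝ) ≤ (9780615625000/53387822061)*u^10*(7/10-u)^8 := (mul_nonneg (mul_nonneg (by norm_num : (0:ℝ) ≤ (9780615625000/53387822061)) (pow_nonneg hu 10)) (pow_nonneg hbb 8))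
  have t4 : (0:ℝ) ≤ (18390154043750/53387822061)*u^11*(7/10-u)^7 := (mul_nonneg (mul_nonneg (by norm_num : (0:ℝ) ≤ (18390154043750/53387822061)) (pow_nonneg hu 11)) (pow_nonneg hbb 7))
  have t5 : (0:ℝ) ≤ (40931272639375/91521980676)*u^12*(7/10-u)^6 := (mul_nonneg (mul_nonneg (by norm_num : (0:ℝ) ≤ (40931272639375/91521980676)) (pow_nonneg hu 12)) (pow_nonneg hbb 6))
  have t6 : (0:ℝ) ≤ (447314001167875/1098263768112)*u^13*(7/10-u)^5 := (mul_nonneg (mul_nonneg (by norm_num : (0:ℝ) ≤ (447314001167875/1098263768112)) (pow_nonneg hu 13)) (pow_nonneg hbb 5))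
  have t7 : (0:ℝ) ≤ (3972805164982625/15375692753568)*u^14*(7/10-u)^4 := (mul_nonneg (mul_nonneg (by norm_num : (0:ℝ) ≤ (3972805164982625/15375692753568)) (pow_nonneg hu 14)) (pow_nonneg hbb 4))
  have t8 : (0:ℝ) ≤ (20410667177936617/184508313042816)*u^15*(7/10-u)^3 := (mul_nonneg (mul_nonneg (by norm_num : (0:ℝ) ≤ (20410667177936617/184508313042816)) (pow_nonneg hu 15)) (pow_nonneg hbb 3))
  have t9 : (0:ℝ) ≤ (219969087207891361/7380332521712640)*u^16*(7/10-u)^2 := (mul_nonneg (mul_nonneg (by norm_num : (0:ℝ) ≤ (219969087207891361/7380332521712640)) (pow_nonneg hu 16)) (pow_nonneg hbb 2))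
  have t10 : (0:ℝ) ≤ (320659739844999619/73803325217126400)*u^17*(7/10-u)^1 := (mul_nonneg (mul_nonneg (by norm_num : (0:ℝ) ≤ (320659739844999619/73803325217126400)) (pow_nonneg hu 17)) (pow_nonneg hbb 1))
  have t11 : (0:ℝ) ≤ (18081920050576360871/79707591234496512000)*u^18 := (mul_nonneg (by norm_num : (0:ℝ) ≤ (18081920050576360871/79707591234496512000)) (pow_nonneg hu 18))
  have key : u^7/30 - (2*(u + u^2/2 + u^3/6 + u^4/24 + u^5/120 + 7*u^6/4320)^3
      - u^3*((1 + (u + u^2/2 + u^3/6 + u^4/24 + u^5/120))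
              *(2 + (u + u^2/2 + u^3/6 + u^4/24 + u^5/120)))) =
      (2500000000/1977326743)*u^7*(7/10-u)^11 + (238750000000/17795940687)*u^8*(7/10-u)^10 + (3431318750000/53387822061)*u^9*(7/10-u)^9 + (9780615625000/53387822061)*u^10*(7/10-u)^8 + (18390154043750/53387822061)*u^11*(7/10-u)^7 + (40931272639375/91521980676)*u^12*(7/10-u)^6 + (447314001167875/1098263768112)*u^13*(7/10-u)^5 + (3972805164982625/15375692753568)*u^14*(7/10-u)^4 + (20410667177936617/184508313042816)*u^15*(7/10-u)^3 + (219969087207891361/7380332521712640)*u^16*(7/10-u)^2 + (320659739844999619/73803325217126400)*u^17*(7/10-u)^1 + (18081920050576360871/79707591234496512000)*u^18 := by ring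
  linarith

lemma certB1 {x : ℝ} (h0 : 0 ≤ x) (h1 : x ≤ 1) :
    0 ≤ 160*x^3 + 320*x^4 + 248*x^5 + 88*x^6 + 15*x^7 := by
  have hbb : (0:ℝ) ≤ 1 - x := by linarith
  have t0 : (0:ℝ) ≤ 160*x^3*(1-x)^4 := (mul_nonneg (mul_nonneg (by norm_num : (0:ℝ) ≤ 160) (pow_nonneg h0 3)) (pow_nonneg hbb 4))
  have t1 : (0:ℝ) ≤ 960*x^4*(1-x)^3 := (mul_nonneg (mul_nonneg (by norm_num : (0:ℝ) ≤ 960) (pow_nonneg h0 4)) (pow_nonneg hbb 3))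
  have t2 : (0:ℝ) ≤ 2168*x^5*(1-x)^2 := (mul_nonneg (mul_nonneg (by norm_num : (0:ℝ) ≤ 2168) (pow_nonneg h0 5)) (pow_nonneg hbb 2))
  have t3 : (0:ℝ) ≤ 2184*x^6*(1-x)^1 := (mul_nonneg (mul_nonneg (by norm_num : (0:ℝ) ≤ 2184) (pow_nonneg h0 6)) (pow_nonneg hbb 1))
  have t4 : (0:ℝ) ≤ 831*x^7 := (mul_nonneg (by norm_num : (0:ℝ) ≤ 831) (pow_nonneg h0 7))
  have key : (160*x^3 + 320*x^4 + 248*x^5 + 88*x^6 + 15*x^7 : ℝ) = 160*x^3*(1-x)^4 + 960*x^4*(1-x)^3 + 2168*x^5*(1-x)^2 + 2184*x^6*(1-x)^1 + 831*x^7 := by ring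
  linarith

lemma certB {x : ℝ} (h0 : 0 ≤ x) (h1 : x ≤ 1) :
    0 ≤ 3255828480*x^6 + 30316953600*x^7 + 132733992960*x^8 + 360519434240*x^9 + 672224051200*x^10 + 891670446080*x^11 + 823970283520*x^12 + 448484372480*x^13 + -35406479360*x^14 + -376624905216*x^15 + -467183619840*x^16 + -373118934912*x^17 + -223856522048*x^18 + -106124405920*x^19 + -40656175088*x^20 + -12725555500*x^21 + -3268927076*x^22 + -688191664*x^23 + -117664560*x^24 + -16008300*x^25 + -1668870*x^26 + -124875*x^27 + -5940*x^28 + -135*x^29 := by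
  have hbb : (0:ℝ) ≤ 1 - x := by linarith
  have t0 : (0:ℝ) ≤ 3255828480*x^6*(1-x)^23 := (mul_nonneg (mul_nonneg (by norm_num : (0:ℝ) ≤ 3255828480) (pow_nonneg h0 6)) (pow_nonneg hbb 23))
  have t1 : (0:ℝ) ≤ 105201008640*x^7*(1-x)^22 := (mul_nonneg (mul_nonneg (by norm_num : (0:ℝ) ≤ 105201008640) (pow_nonneg h0 7)) (pow_nonneg hbb 22))
  have t2 : (0:ℝ) ≤ 1623431577600*x^8*(1-x)^21 := (mul_nonneg (mul_nonneg (by norm_num : (0:ℝ) ≤ 1623431577600) (pow_nonneg h0 8)) (pow_nonneg hbb 21))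
  have t3 : (0:ℝ) ≤ 15917221806080*x^9*(1-x)^20 := (mul_nonneg (mul_nonneg (by norm_num : (0:ℝ) ≤ 15917221806080) (pow_nonneg h0 9)) (pow_nonneg hbb 20))
  have t4 : (0:ℝ) ≤ 111275220992000*x^10*(1-x)^19 := (mul_nonneg (mul_nonneg (by norm_num : (0:ℝ) ≤ 111275220992000) (pow_nonneg h0 10)) (pow_nonneg hbb 19))
  have t5 : (0:ℝ) ≤ 590022718668800*x^11*(1-x)^18 := (mul_nonneg (mul_nonneg (by norm_num : (0:ℝ) ≤ 590022718668800) (pow_nonneg h0 11)) (pow_nonneg hbb 18))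
  have t6 : (0:ℝ) ≤ 2464262227640320*x^12*(1-x)^17 := (mul_nonneg (mul_nonneg (by norm_num : (0:ℝ) ≤ 2464262227640320) (pow_nonneg h0 12)) (pow_nonneg hbb 17))
  have t7 : (0:ℝ) ≤ 8310215346319360*x^13*(1-x)^16 := (mul_nonneg (mul_nonneg (by norm_num : (0:ℝ) ≤ 8310215346319360) (pow_nonneg h0 13)) (pow_nonneg hbb 16))
  have t8 : (0:ℝ) ≤ 23011267331031040*x^14*(1-x)^15 := (mul_nonneg (mul_nonneg (by norm_num : (0:ℝ) ≤ 23011267331031040) (pow_nonneg h0 14)) (pow_nonneg hbb 15))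
  have t9 : (0:ℝ) ≤ 52921467728528384*x^15*(1-x)^14 := (mul_nonneg (mul_nonneg (by norm_num : (0:ℝ) ≤ 52921467728528384) (pow_nonneg h0 15)) (pow_nonneg hbb 14))
  have t10 : (0:ℝ) ≤ 101844006745139456*x^16*(1-x)^13 := (mul_nonneg (mul_nonneg (by norm_num : (0:ℝ) ≤ 101844006745139456) (pow_nonneg h0 16)) (pow_nonneg hbb 13))
  have t11 : (0:ℝ) ≤ 164718742523906432*x^17*(1-x)^12 := (mul_nonneg (mul_nonneg (by norm_num : (0:ℝ) ≤ 164718742523906432) (pow_nonneg h0 17)) (pow_nonneg hbb 12))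
  have t12 : (0:ℝ) ≤ 224273362073137344*x^18*(1-x)^11 := (mul_nonneg (mul_nonneg (by norm_num : (0:ℝ) ≤ 224273362073137344) (pow_nonneg h0 18)) (pow_nonneg hbb 11))
  have t13 : (0:ℝ) ≤ 256843080708022944*x^19*(1-x)^10 := (mul_nonneg (mul_nonneg (by norm_num : (0:ℝ) ≤ 256843080708022944) (pow_nonneg h0 19)) (pow_nonneg hbb 10))
  have t14 : (0:ℝ) ≤ 246560596612419600*x^20*(1-x)^9 := (mul_nonneg (mul_nonneg (by norm_num : (0:ℝ) ≤ 246560596612419600) (pow_nonneg h0 20)) (pow_nonneg hbb 9))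
  have t15 : (0:ℝ) ≤ 197157073948117380*x^21*(1-x)^8 := (mul_nonneg (mul_nonneg (by norm_num : (0:ℝ) ≤ 197157073948117380) (pow_nonneg h0 21)) (pow_nonneg hbb 8))
  have t16 : (0:ℝ) ≤ 130048329049947900*x^22*(1-x)^7 := (mul_nonneg (mul_nonneg (by norm_num : (0:ℝ) ≤ 130048329049947900) (pow_nonneg h0 22)) (pow_nonneg hbb 7))
  have t17 : (0:ℝ) ≤ 69763621993065540*x^23*(1-x)^6 := (mul_nonneg (mul_nonneg (by norm_num : (0:ℝ) ≤ 69763621993065540) (pow_nonneg h0 23)) (pow_nonneg hbb 6))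
  have t18 : (0:ℝ) ≤ 29819403362732220*x^24*(1-x)^5 := (mul_nonneg (mul_nonneg (by norm_num : (0:ℝ) ≤ 29819403362732220) (pow_nonneg h0 24)) (pow_nonneg hbb 5))
  have t19 : (0:ℝ) ≤ 9856712184146496*x^25*(1-x)^4 := (mul_nonneg (mul_nonneg (by norm_num : (0:ℝ) ≤ 9856712184146496) (pow_nonneg h0 25)) (pow_nonneg hbb 4))
  have t20 : (0:ℝ) ≤ 2407591259594334*x^26*(1-x)^3 := (mul_nonneg (mul_nonneg (by norm_num : (0:ℝ) ≤ 2407591259594334) (pow_nonneg h0 26)) (pow_nonneg hbb 3))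
  have t21 : (0:ℝ) ≤ 403409134410183*x^27*(1-x)^2 := (mul_nonneg (mul_nonneg (by norm_num : (0:ℝ) ≤ 403409134410183) (pow_nonneg h0 27)) (pow_nonneg hbb 2))
  have t22 : (0:ℝ) ≤ 40371524133336*x^28*(1-x)^1 := (mul_nonneg (mul_nonneg (by norm_num : (0:ℝ) ≤ 40371524133336) (pow_nonneg h0 28)) (pow_nonneg hbb 1))
  have t23 : (0:ℝ) ≤ 1723386173256*x^29 := (mul_nonneg (by norm_num : (0:ℝ) ≤ 1723386173256) (pow_nonneg h0 29))
  have key : (3255828480*x^6 + 30316953600*x^7 + 132733992960*x^8 + 360519434240*x^9 + 672224051200*x^10 + 891670446080*x^11 + 823970283520*x^12 + 448484372480*x^13 + -35406479360*x^14 + -376624905216*x^15 + -467183619840*x^16 + -373118934912*x^17 + -223856522048*x^18 + -106124405920*x^19 + -40656175088*x^20 + -12725555500*x^21 + -3268927076*x^22 + -688191664*x^23 + -117664560*x^24 + -16008300*x^25 + -1668870*x^26 + -124875*x^27 + -5940*x^28 + -135*x^29 : ℝ) = 3255828480*x^6*(1-x)^23 + 105201008640*x^7*(1-x)^22 + 1623431577600*x^8*(1-x)^21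 + 15917221806080*x^9*(1-x)^20 + 111275220992000*x^10*(1-x)^19 + 590022718668800*x^11*(1-x)^18 + 2464262227640320*x^12*(1-x)^17 + 8310215346319360*x^13*(1-x)^16 + 23011267331031040*x^14*(1-x)^15 + 52921467728528384*x^15*(1-x)^14 + 101844006745139456*x^16*(1-x)^13 + 164718742523906432*x^17*(1-x)^12 + 224273362073137344*x^18*(1-x)^11 + 256843080708022944*x^19*(1-x)^10 + 246560596612419600*x^20*(1-x)^9 + 197157073948117380*x^21*(1-x)^8 + 130048329049947900*x^22*(1-x)^7 + 69763621993065540*x^23*(1-x)^6 + 29819403362732220*x^24*(1-x)^5 + 9856712184146496*x^25*(1-x)^4 + 2407591259594334*x^26*(1-x)^3 + 403409134410183*x^27*(1-x)^2 + 40371524133336*x^28*(1-x)^1 + 1723386173256*x^29 := by ring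
  linarith

lemma hd_congr {f g : ℝ → ℝ} {d e x : ℝ} (h : HasDerivAt f d x) (hfg : g = f) (hde : e = d) :
    HasDerivAt g e x := by rw [hfg, hde]; exact h

noncomputable def Llo (x : ℝ) : ℝ := (30*x*(2+x)^4 + 10*x^3*(2+x)^2 + 6*x^5)/(15*(2+x)^5)
noncomputable def Lhi (x : ℝ) : ℝ := Llo x + x^7/(2+x)^7

lemma hasDerivAt_log1p {x : ℝ} (hx : (0:ℝ) < 1 + x) :
    HasDerivAt (fun y : ℝ => Real.log (1+y)) (1/(1+x)) x := by
  have h1 : HasDerivAt (fun y : ℝ => 1 + y) 1 x := (hasDerivAt_id x).const_add 1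
  have h2 := (Real.hasDerivAt_log (ne_of_gt hx)).comp x h1
  exact hd_congr h2 rfl (by rw [one_div, mul_one])

lemma hasDerivAt_Llo {x : ℝ} (hx : (0:ℝ) ≤ x) :
    HasDerivAt Llo (((2+x)^6 - x^6)/((1+x)*(2+x)^6)) x := by
  have h1x : (0:ℝ) < 1 + x := by linarith
  have h2x : HasDerivAt (fun y : ℝ => 2 + y) 1 x := (hasDerivAt_id x).const_add 2
  have hN : HasDerivAt (fun y : ℝ => 30*y*(2+y)^4 + 10*y^3*(2+y)^2 + 6*y^5)
      (30*((2+x)^4 + x*(4*(2+x)^3)) + 10*(3*x^2*(2+x)^2 + x^3*(2*(2+x))) + 30*x^4) x := by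
    have hb := (((hasDerivAt_id x).mul (h2x.pow 4)).const_mul 30).add
        (((((hasDerivAt_pow 3 x)).mul (h2x.pow 2)).const_mul 10).add
          ((hasDerivAt_pow 5 x).const_mul 6))
    exact hd_congr hb (by funext y; simp only [Pi.add_apply, Pi.mul_apply, Pi.pow_apply, id_eq]; ring) (by simp only [Pi.pow_apply, id_eq]; push_cast; ring)
  have hD : HasDerivAt (fun y : ℝ => 15*(2+y)^5) (15*(5*(2+x)^4)) x := by
    have hb := (h2x.pow 5).const_mul 15
    exact hd_congr hb (by funext y; simp only [Pi.pow_apply]) (by push_cast; try ring)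
  have hDne : 15*(2+x)^5 ≠ 0 := by positivity
  have := hN.div hD hDne
  refine hd_congr this rfl ?_
  rw [div_eq_div_iff (by positivity) (by positivity)]
  ring

lemma hasDerivAt_Lhi {x : ℝ} (hx : (0:ℝ) ≤ x) :
    HasDerivAt Lhi (((2+x)^6 - x^6)/((1+x)*(2+x)^6) + 14*x^6/(2+x)^8) x := by
  have h2x : HasDerivAt (fun y : ℝ => 2 + y) 1 x := (hasDerivAt_id x).const_add 2
  have h7 : HasDerivAt (fun y : ℝ => y^7/(2+y)^7) (14*x^6/(2+x)^8) x := by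
    have hdd : HasDerivAt (fun y : ℝ => (2+y)^7) (7*(2+x)^6) x := by
      have := h2x.pow 7
      exact hd_congr this rfl (by push_cast; try ring)
    have hne : (2+x)^7 ≠ 0 := by positivity
    have := (hasDerivAt_pow 7 x).div hdd hne
    refine hd_congr this rfl ?_
    rw [div_eq_div_iff (by positivity) (by positivity)]
    push_cast
    ring
  exact (hasDerivAt_Llo hx).add h7

lemma log_lb {x : ℝ} (h0 : 0 ≤ x) (h1 : x ≤ 1) : Llo x ≤ Real.log (1+x) := by
  set g : ℝ → ℝ := fun y => Real.log (1+y) - Llo y with hg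
  have hder : ∀ y ∈ Icc (0:ℝ) 1, HasDerivAt g (y^6/((1+y)*(2+y)^6)) y := by
    intro y hy
    have hy0 : (0:ℝ) ≤ y := hy.1
    have h1p : (0:ℝ) < 1 + y := by linarith
    have := (hasDerivAt_log1p h1p).sub (hasDerivAt_Llo hy0)
    refine hd_congr this rfl ?_
    rw [eq_sub_iff_add_eq, div_add_div _ _ (by positivity) (by positivity),
        div_eq_div_iff (by positivity) (by positivity)]
    ring
  have hmono : MonotoneOn g (Icc (0:ℝ) 1) := by
    apply monotoneOn_of_deriv_nonneg (convex_Icc 0 1)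
    · exact fun y hy => ((hder y hy).continuousAt).continuousWithinAt
    · intro y hy
      rw [interior_Icc] at hy
      exact ((hder y (Ioo_subset_Icc_self hy)).differentiableAt).differentiableWithinAt
    · intro y hy
      rw [interior_Icc] at hy
      rw [(hder y (Ioo_subset_Icc_self hy)).deriv]
      have : (0:ℝ) < y := hy.1
      positivity
  have h00 : g 0 = 0 := by
    simp [hg, Llo]
  have := hmono (by constructor <;> norm_num : (0:ℝ) ∈ Icc (0:ℝ) 1) ⟨h0, h1⟩ h0
  rw [h00] at this
  simp only [hg] at this
  linarith

lemma log_ub {x : ℝ} (h0 : 0 ≤ x) (h1 : x ≤ 1) : Real.log (1+x) ≤ Lhi x := by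
  set g : ℝ → ℝ := fun y => Lhi y - Real.log (1+y) with hg
  have hder : ∀ y ∈ Icc (0:ℝ) 1, HasDerivAt g (y^6*(10+10*y-y^2)/((1+y)*(2+y)^8)) y := by
    intro y hy
    have hy0 : (0:ℝ) ≤ y := hy.1
    have h1p : (0:ℝ) < 1 + y := by linarith
    have := (hasDerivAt_Lhi hy0).sub (hasDerivAt_log1p h1p)
    refine hd_congr this rfl ?_
    have hne1 : (1:ℝ) + y ≠ 0 := by positivity
    have hne2 : (2:ℝ) + y ≠ 0 := by positivity
    field_simp
    ring
  have hmono : MonotoneOn g (Icc (0:ℝ) 1) := by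
    apply monotoneOn_of_deriv_nonneg (convex_Icc 0 1)
    · exact fun y hy => ((hder y hy).continuousAt).continuousWithinAt
    · intro y hy
      rw [interior_Icc] at hy
      exact ((hder y (Ioo_subset_Icc_self hy)).differentiableAt).differentiableWithinAt
    · intro y hy
      rw [interior_Icc] at hy
      rw [(hder y (Ioo_subset_Icc_self hy)).deriv]
      have hy0 : (0:ℝ) < y := hy.1
      have hy1 : y < 1 := hy.2
      have : (0:ℝ) < 10 + 10*y - y^2 := by nlinarith
      positivity
  have h00 : g 0 = 0 := by
    simp [hg, Lhi, Llo]
  have := hmono (by constructor <;> norm_num : (0:ℝ) ∈ Icc (0:ℝ) 1) ⟨h0, h1⟩ h0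
  rw [h00] at this
  simp only [hg] at this
  linarith


lemma S_lb {x : ℝ} (hx0 : 0 < x) (hx1 : x < 1) :
    1/100 ≤ q1 x^3 + 3*q1 x*q2 x + q3 x := by
  have h0 : (0:ℝ) ≤ x := hx0.le
  have h1 : x ≤ 1 := hx1.le
  have h1x : (0:ℝ) < 1 + x := by linarith
  have hxne : x ≠ 0 := hx0.ne'
  have h1xne : (1:ℝ) + x ≠ 0 := h1x.ne'
  have h2xne : (2:ℝ) + x ≠ 0 := by positivity
  set l := Real.log (1+x) with hldef
  have hA : Llo x ≤ l := log_lb h0 h1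
  have hB : l ≤ Lhi x := log_ub h0 h1
  have hlx : l ≤ x := by
    have := Real.log_le_sub_one_of_pos h1x
    linarith
  have e1 : q1 x = (x - l)/x^2 := by
    simp only [q1, ← hldef]
    field_simp
  have e2 : q2 x = (2*l - x - x/(1+x))/x^3 := by
    simp only [q2, ← hldef]
    field_simp
  have e3 : q3 x = (-6*l)/x^4 + (2/(x^3*(1+x)) + 2/x^3 + (2+3*x)/(x^3*(1+x)^2)) := by
    simp only [q3, ← hldef]
    ring
  have hq1_lb : (x - Lhi x)/x^2 ≤ q1 x := by
    rw [e1]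
    exact (div_le_div_iff_of_pos_right (by positivity)).mpr (by linarith)
  have hq1_ub : q1 x ≤ (x - Llo x)/x^2 := by
    rw [e1]
    exact (div_le_div_iff_of_pos_right (by positivity)).mpr (by linarith)
  have hq1_nonneg : 0 ≤ q1 x := by
    rw [e1]
    exact div_nonneg (by linarith) (by positivity)
  have hq2_lb : (2*Llo x - x - x/(1+x))/x^3 ≤ q2 x := by
    rw [e2]
    exact (div_le_div_iff_of_pos_right (by positivity)).mpr (by linarith)
  have hq2lo_neg : (2*Llo x - x - x/(1+x))/x^3 ≤ 0 := by
    apply div_nonpos_of_nonpos_of_nonneg _ (by positivity)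
    have hcert := certB1 h0 h1
    have key : x + x/(1+x) - 2*Llo x
        = (160*x^3 + 320*x^4 + 248*x^5 + 88*x^6 + 15*x^7)/(15*(1+x)*(2+x)^5) := by
      simp only [Llo]
      field_simp
      ring
    have h2 : 0 ≤ (160*x^3 + 320*x^4 + 248*x^5 + 88*x^6 + 15*x^7)/(15*(1+x)*(2+x)^5) :=
      div_nonneg hcert (by positivity)
    linarith
  have hq3_lb : (-6*Lhi x)/x^4 + (2/(x^3*(1+x)) + 2/x^3 + (2+3*x)/(x^3*(1+x)^2)) ≤ q3 x := by
    rw [e3]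
    have : (-6*Lhi x)/x^4 ≤ (-6*l)/x^4 :=
      (div_le_div_iff_of_pos_right (by positivity)).mpr (by linarith)
    linarith
  have hprod : 3*((x - Llo x)/x^2)*((2*Llo x - x - x/(1+x))/x^3) ≤ 3*(q1 x*q2 x) := by
    have s1 : q1 x*((2*Llo x - x - x/(1+x))/x^3) ≤ q1 x*q2 x :=
      mul_le_mul_of_nonneg_left hq2_lb hq1_nonneg
    have s2 : ((x - Llo x)/x^2)*((2*Llo x - x - x/(1+x))/x^3)
        ≤ q1 x*((2*Llo x - x - x/(1+x))/x^3) :=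
      mul_le_mul_of_nonpos_right hq1_ub hq2lo_neg
    linarith
  have hcube : ((x - Lhi x)/x^2)^3 ≤ q1 x^3 := cube_le_cube hq1_lb
  have hfin : 1/100 ≤ (-6*Lhi x)/x^4 + (2/(x^3*(1+x)) + 2/x^3 + (2+3*x)/(x^3*(1+x)^2))
      + 3*((x - Llo x)/x^2)*((2*Llo x - x - x/(1+x))/x^3) + ((x - Lhi x)/x^2)^3 := by
    have hc := certB h0 h1
    have key : (-6*Lhi x)/x^4 + (2/(x^3*(1+x)) + 2/x^3 + (2+3*x)/(x^3*(1+x)^2))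
        + 3*((x - Llo x)/x^2)*((2*Llo x - x - x/(1+x))/x^3) + ((x - Lhi x)/x^2)^3 - 1/100
        = (3255828480*x^6 + 30316953600*x^7 + 132733992960*x^8 + 360519434240*x^9 + 672224051200*x^10 + 891670446080*x^11 + 823970283520*x^12 + 448484372480*x^13 + -35406479360*x^14 + -376624905216*x^15 + -467183619840*x^16 + -373118934912*x^17 + -223856522048*x^18 + -106124405920*x^19 + -40656175088*x^20 + -12725555500*x^21 + -3268927076*x^22 + -688191664*x^23 + -117664560*x^24 + -16008300*x^25 + -1668870*x^26 + -124875*x^27 + -5940*x^28 + -135*x^29)/(13500*x^6*(1+x)^2*(2+x)^21) := by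
      simp only [Lhi, Llo]
      field_simp
      ring
    have h2 : 0 ≤ (3255828480*x^6 + 30316953600*x^7 + 132733992960*x^8 + 360519434240*x^9 + 672224051200*x^10 + 891670446080*x^11 + 823970283520*x^12 + 448484372480*x^13 + -35406479360*x^14 + -376624905216*x^15 + -467183619840*x^16 + -373118934912*x^17 + -223856522048*x^18 + -106124405920*x^19 + -40656175088*x^20 + -12725555500*x^21 + -3268927076*x^22 + -688191664*x^23 + -117664560*x^24 + -16008300*x^25 + -1668870*x^26 + -124875*x^27 + -5940*x^28 + -135*x^29)/(13500*x^6*(1+x)^2*(2+x)^21) := div_nonneg hc (by positivity)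
    linarith
  nlinarith [hq3_lb, hprod, hcube, hfin]

lemma exp_lb6 {u : ℝ} (hu : 0 ≤ u) :
    1 + u + u^2/2 + u^3/6 + u^4/24 + u^5/120 ≤ Real.exp u := by
  have h := Real.sum_le_exp_of_nonneg hu 6
  simp [Finset.sum_range_succ, Nat.factorial] at h
  linarith [h]

lemma exp_ub6 {u : ℝ} (hu : 0 ≤ u) (hu1 : u ≤ 7/10) :
    Real.exp u - (1 + u + u^2/2 + u^3/6 + u^4/24 + u^5/120) ≤ 7*u^6/4320 := by
  have h := Real.exp_bound (x := u) (by rw [abs_of_nonneg hu]; linarith) (n := 6) (by norm_num)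
  rw [abs_of_nonneg hu] at h
  have h2 := (abs_le.mp h).2
  simp [Finset.sum_range_succ, Nat.factorial] at h2
  nlinarith [h2]

lemma hasDerivAt_E (x : ℝ) : HasDerivAt E (Real.log 2 * E x) x := by
  have h : HasDerivAt (fun y : ℝ => y * Real.log 2) (Real.log 2) x := by
    simpa using (hasDerivAt_id x).mul_const (Real.log 2)
  have h2 := h.exp
  exact hd_congr h2 (by funext y; simp only [E]) (by simp only [E]; ring)

lemma hasDerivAt_q {x : ℝ} (hx : 0 < x) : HasDerivAt q (q1 x) x := by
  have hxne : x ≠ 0 := hx.ne'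
  have h1xne : (1:ℝ) + x ≠ 0 := by positivity
  have h1 : HasDerivAt (fun y : ℝ => 1 + 1/y) (-(1/x^2)) x := by
    have := (hasDerivAt_inv hxne).const_add 1
    exact hd_congr this (by funext y; rw [one_div]) (by rw [one_div])
  have h2 : HasDerivAt (fun y : ℝ => Real.log (1+y)) (1/(1+x)) x :=
    hasDerivAt_log1p (by positivity)
  have := h1.mul h2
  refine hd_congr this (by funext y; simp only [q, Pi.mul_apply]) ?_
  simp only [q1]
  field_simp
  ring

lemma hasDerivAt_q1 {x : ℝ} (hx : 0 < x) : HasDerivAt q1 (q2 x) x := by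
  have hxne : x ≠ 0 := hx.ne'
  have h1xne : (1:ℝ) + x ≠ 0 := by positivity
  have h1 : HasDerivAt (fun y : ℝ => 1/y) (-(1/x^2)) x := by
    have := hasDerivAt_inv hxne
    exact hd_congr this (by funext y; rw [one_div]) (by rw [one_div])
  have h2 : HasDerivAt (fun y : ℝ => Real.log (1+y)/y^2)
      (((1/(1+x))*x^2 - Real.log (1+x)*(2*x))/(x^2)^2) x := by
    have hl := hasDerivAt_log1p (show (0:ℝ) < 1 + x by positivity)
    have hp : HasDerivAt (fun y : ℝ => y^2) (2*x) x := by
      have := hasDerivAt_pow 2 x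
      exact hd_congr this rfl (by push_cast; try ring)
    exact hl.div hp (pow_ne_zero 2 hxne)
  have := h1.sub h2
  refine hd_congr this (by funext y; simp only [q1, Pi.sub_apply]) ?_
  simp only [q2]
  field_simp
  ring

lemma hasDerivAt_q2 {x : ℝ} (hx : 0 < x) : HasDerivAt q2 (q3 x) x := by
  have hxne : x ≠ 0 := hx.ne'
  have h1x : (0:ℝ) < 1 + x := by positivity
  have h1xne : (1:ℝ) + x ≠ 0 := h1x.ne'
  have hp2 : HasDerivAt (fun y : ℝ => y^2) (2*x) x := by
    have := hasDerivAt_pow 2 x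
    exact hd_congr this rfl (by push_cast; try ring)
  have hp3 : HasDerivAt (fun y : ℝ => y^3) (3*x^2) x := by
    have := hasDerivAt_pow 3 x
    exact hd_congr this rfl (by push_cast; try ring)
  have h1 : HasDerivAt (fun y : ℝ => 2*Real.log (1+y)/y^3)
      (((2*(1/(1+x)))*x^3 - 2*Real.log (1+x)*(3*x^2))/(x^3)^2) x := by
    have hl := (hasDerivAt_log1p h1x).const_mul 2
    have := hl.div hp3 (pow_ne_zero 3 hxne)
    refine hd_congr this (by funext y; simp only [Pi.div_apply]) ?_
    ring
  have h2 : HasDerivAt (fun y : ℝ => 1/y^2) ((0*x^2 - 1*(2*x))/(x^2)^2) x :=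
    (hasDerivAt_const x 1).div hp2 (pow_ne_zero 2 hxne)
  have h3 : HasDerivAt (fun y : ℝ => 1/(y^2*(1+y)))
      ((0*(x^2*(1+x)) - 1*(2*x*(1+x) + x^2*1))/(x^2*(1+x))^2) x := by
    have hd : HasDerivAt (fun y : ℝ => y^2*(1+y)) (2*x*(1+x) + x^2*1) x :=
      hp2.mul ((hasDerivAt_id x).const_add 1)
    exact (hasDerivAt_const x 1).div hd (by positivity)
  have := (h1.sub h2).sub h3
  refine hd_congr this (by funext y; simp only [q2, Pi.sub_apply]) ?_
  simp only [q3]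
  field_simp
  ring

lemma hasDerivAt_f {x : ℝ} (hx : 0 < x) : HasDerivAt f (f1 x) x := by
  have hxne : x ≠ 0 := hx.ne'
  have hE1 : 1 < E x := E_gt_one hx
  have hEne : E x - 1 ≠ 0 := by linarith
  have ha : HasDerivAt Real.log (1/x) x := by
    have := Real.hasDerivAt_log hxne
    exact hd_congr this rfl (by rw [one_div])
  have hb : HasDerivAt (fun y : ℝ => Real.log (E y - 1)) ((E x - 1)⁻¹ * (Real.log 2 * E x)) x := by
    have hin : HasDerivAt (fun y : ℝ => E y - 1) (Real.log 2 * E x) x :=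
      (hasDerivAt_E x).sub_const 1
    exact (Real.hasDerivAt_log hEne).comp x hin
  have hc : HasDerivAt (fun y : ℝ => (1/2)*Real.exp (q y))
      ((1/2)*(Real.exp (q x) * q1 x)) x := ((hasDerivAt_q hx).exp).const_mul (1/2)
  have hd' : HasDerivAt (fun y : ℝ => y + 1) 1 x := (hasDerivAt_id x).add_const 1
  have := ((ha.sub hb).sub hc).add hd'
  refine hd_congr this (by funext y; simp only [f, Pi.add_apply, Pi.sub_apply]) ?_
  simp only [f1]
  field_simp
  try ring

lemma hasDerivAt_f1 {x : ℝ} (hx : 0 < x) : HasDerivAt f1 (f2 x) x := by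
  have hxne : x ≠ 0 := hx.ne'
  have hE1 : 1 < E x := E_gt_one hx
  have hEne : E x - 1 ≠ 0 := by linarith
  have ha : HasDerivAt (fun y : ℝ => 1/y) (-(1/x^2)) x := by
    have := hasDerivAt_inv hxne
    exact hd_congr this (by funext y; rw [one_div]) (by rw [one_div])
  have hb : HasDerivAt (fun y : ℝ => Real.log 2 * E y/(E y - 1))
      ((Real.log 2*(Real.log 2 * E x)*(E x - 1) - Real.log 2*E x*(Real.log 2 * E x))/(E x - 1)^2) x := by
    have hn : HasDerivAt (fun y : ℝ => Real.log 2 * E y) (Real.log 2*(Real.log 2 * E x)) x :=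
      (hasDerivAt_E x).const_mul (Real.log 2)
    have hdn : HasDerivAt (fun y : ℝ => E y - 1) (Real.log 2 * E x) x :=
      (hasDerivAt_E x).sub_const 1
    exact hn.div hdn hEne
  have hc : HasDerivAt (fun y : ℝ => (1/2)*Real.exp (q y)*q1 y)
      ((1/2)*(Real.exp (q x) * q1 x * q1 x + Real.exp (q x) * q2 x)) x := by
    have h1 : HasDerivAt (fun y : ℝ => Real.exp (q y) * q1 y)
        (Real.exp (q x) * q1 x * q1 x + Real.exp (q x) * q2 x) x :=
      ((hasDerivAt_q hx).exp).mul (hasDerivAt_q1 hx)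
    have := h1.const_mul (1/2)
    exact hd_congr this (by funext y; ring) (by ring)
  have hone : HasDerivAt (fun _ : ℝ => (1:ℝ)) 0 x := hasDerivAt_const x 1
  have := ((ha.sub hb).sub hc).add hone
  refine hd_congr this (by funext y; simp only [f1, Pi.add_apply, Pi.sub_apply]) ?_
  simp only [f2]
  field_simp
  try ring

lemma hasDerivAt_f2 {x : ℝ} (hx : 0 < x) : HasDerivAt f2 (f3 x) x := by
  have hxne : x ≠ 0 := hx.ne'
  have hE1 : 1 < E x := E_gt_one hx
  have hEne : E x - 1 ≠ 0 := by linarith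
  have hp2 : HasDerivAt (fun y : ℝ => y^2) (2*x) x := by
    have := hasDerivAt_pow 2 x
    exact hd_congr this rfl (by push_cast; try ring)
  have ha : HasDerivAt (fun y : ℝ => -1/y^2) ((0*x^2 - (-1)*(2*x))/(x^2)^2) x :=
    (hasDerivAt_const x (-1)).div hp2 (pow_ne_zero 2 hxne)
  have hb : HasDerivAt (fun y : ℝ => (Real.log 2)^2 * E y/(E y - 1)^2)
      (((Real.log 2)^2*(Real.log 2 * E x)*(E x - 1)^2
        - (Real.log 2)^2*E x*(2*(E x - 1)*(Real.log 2 * E x)))/((E x - 1)^2)^2) x := by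
    have hn : HasDerivAt (fun y : ℝ => (Real.log 2)^2 * E y) ((Real.log 2)^2*(Real.log 2 * E x)) x :=
      (hasDerivAt_E x).const_mul ((Real.log 2)^2)
    have hdn : HasDerivAt (fun y : ℝ => (E y - 1)^2) (2*(E x - 1)*(Real.log 2 * E x)) x := by
      have hin : HasDerivAt (fun y : ℝ => E y - 1) (Real.log 2 * E x) x :=
        (hasDerivAt_E x).sub_const 1
      have := hin.pow 2
      exact hd_congr this rfl (by push_cast; try ring)
    exact hn.div hdn (pow_ne_zero 2 hEne)
  have hc : HasDerivAt (fun y : ℝ => (1/2)*Real.exp (q y)*(q1 y^2 + q2 y))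
      ((1/2)*(Real.exp (q x) * q1 x * (q1 x^2 + q2 x)
        + Real.exp (q x) * (2*q1 x*q2 x + q3 x))) x := by
    have hsq : HasDerivAt (fun y : ℝ => q1 y^2 + q2 y) (2*q1 x*q2 x + q3 x) x := by
      have h1 := (hasDerivAt_q1 hx).pow 2
      have h2 := hasDerivAt_q2 hx
      have := h1.add h2
      exact hd_congr this rfl (by push_cast; try ring)
    have h1 : HasDerivAt (fun y : ℝ => Real.exp (q y) * (q1 y^2 + q2 y))
        (Real.exp (q x) * q1 x * (q1 x^2 + q2 x) + Real.exp (q x) * (2*q1 x*q2 x + q3 x)) x :=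
      ((hasDerivAt_q hx).exp).mul hsq
    have := h1.const_mul (1/2)
    exact hd_congr this (by funext y; ring) (by ring)
  have := (ha.add hb).sub hc
  refine hd_congr this (by funext y; simp only [f2, Pi.add_apply, Pi.sub_apply]; try ring) ?_
  simp only [f3]
  field_simp
  ring

lemma E_one : E 1 = 2 := by
  simp only [E, one_mul]
  exact Real.exp_log (by norm_num)

lemma expq_one : Real.exp (q 1) = 4 := by
  have : q 1 = Real.log 2 + Real.log 2 := by
    simp only [q]
    norm_num
    ring
  rw [this, Real.exp_add, Real.exp_log (by norm_num : (0:ℝ) < 2)]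
  norm_num

lemma f_one : f 1 = 0 := by
  simp only [f, E_one, expq_one]
  norm_num

lemma q1_one : q1 1 = 1 - Real.log 2 := by
  simp only [q1]
  norm_num

lemma q2_one : q2 1 = 2*Real.log 2 - 3/2 := by
  simp only [q2]
  norm_num
  ring

lemma f1_one : f1 1 = 0 := by
  simp only [f1, E_one, expq_one, q1_one]
  norm_num
  ring

lemma f2_one : f2 1 = 0 := by
  simp only [f2, E_one, expq_one, q1_one, q2_one]
  norm_num
  ring

set_option maxHeartbeats 1000000 in
lemma f3_nonpos {x : ℝ} (hx0 : 0 < x) (hx1 : x < 1) : f3 x ≤ 0 := by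
  have hxne : x ≠ 0 := hx0.ne'
  have h1x : (0:ℝ) < 1 + x := by linarith
  have hc0 : (0:ℝ) < Real.log 2 := Real.log_pos (by norm_num)
  have hcub : Real.log 2 < 0.6931471808 := Real.log_two_lt_d9
  obtain ⟨u, hu_def⟩ : ∃ u : ℝ, u = x * Real.log 2 := ⟨_, rfl⟩
  have hu0 : 0 < u := by rw [hu_def]; exact mul_pos hx0 hc0
  have hu7 : u ≤ 7/10 := by rw [hu_def]; nlinarith
  have hEexp : E x = Real.exp u := by rw [hu_def]; rfl
  have hE1 : 1 < E x := E_gt_one hx0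
  have hlb := exp_lb6 hu0.le
  have hub := exp_ub6 hu0.le hu7
  rw [← hEexp] at hlb hub
  have hcube : (E x - 1)^3 ≤ (u + u^2/2 + u^3/6 + u^4/24 + u^5/120 + 7*u^6/4320)^3 := by
    apply pow_le_pow_left₀ (by linarith) (by linarith)
  have hPpos : (0:ℝ) ≤ u + u^2/2 + u^3/6 + u^4/24 + u^5/120 := by positivity
  have hEE : (1 + (u + u^2/2 + u^3/6 + u^4/24 + u^5/120))
      * (2 + (u + u^2/2 + u^3/6 + u^4/24 + u^5/120)) ≤ E x * (E x + 1) := by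
    have hprod : 0 ≤ (E x - (1 + (u + u^2/2 + u^3/6 + u^4/24 + u^5/120)))
        * (E x + (2 + (u + u^2/2 + u^3/6 + u^4/24 + u^5/120))) :=
      mul_nonneg (by linarith) (by linarith)
    nlinarith [hprod]
  have hA : 2*(E x - 1)^3 - u^3*(E x*(E x + 1)) ≤ u^7/30 := by
    have hc := certA hu0.le hu7
    have hm : u^3*((1 + (u + u^2/2 + u^3/6 + u^4/24 + u^5/120))
        *(2 + (u + u^2/2 + u^3/6 + u^4/24 + u^5/120))) ≤ u^3*(E x*(E x + 1)) :=
      mul_le_mul_of_nonneg_left hEE (by positivity)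
    nlinarith [hcube]
  have hS := S_lb hx0 hx1
  have hp : (2:ℝ) ≤ Real.exp (q x) := by
    have hlog_ge : x/(1+x) ≤ Real.log (1+x) := by
      have h := Real.log_le_sub_one_of_pos (show (0:ℝ) < (1+x)⁻¹ by positivity)
      rw [Real.log_inv] at h
      have h2 : (1:ℝ) - (1+x)⁻¹ = x/(1+x) := by rw [eq_div_iff h1x.ne', sub_mul, inv_mul_cancel₀ h1x.ne']; ring
      linarith
    have hq_ge : 1 ≤ q x := by
      have hfac : (0:ℝ) ≤ 1 + 1/x := by positivity
      have h3 : (1+1/x)*(x/(1+x)) ≤ (1+1/x)*Real.log (1+x) :=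
        mul_le_mul_of_nonneg_left hlog_ge hfac
      have h4 : (1+1/x)*(x/(1+x)) = 1 := by field_simp; ring
      simp only [q]
      linarith
    calc (2:ℝ) = 1 + 1 := by norm_num
    _ ≤ Real.exp 1 := by linarith [Real.add_one_le_exp 1]
    _ ≤ Real.exp (q x) := Real.exp_le_exp.mpr hq_ge
  have huE : u ≤ E x - 1 := by
    have := Real.add_one_le_exp u
    rw [← hEexp] at this
    linarith
  have hcube2 : u^3 ≤ (E x - 1)^3 := pow_le_pow_left₀ hu0.le huE 3
  have hc7 : Real.log 2 ≤ 0.694 := by linarith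
  have hm2 : Real.log 2 * Real.log 2 ≤ 0.694*0.694 :=
    mul_le_mul hc7 hc7 hc0.le (by norm_num)
  have hm4 : (Real.log 2*Real.log 2)*(Real.log 2*Real.log 2) ≤ (0.694*0.694)*(0.694*0.694) :=
    mul_le_mul hm2 hm2 (mul_nonneg hc0.le hc0.le) (by norm_num)
  have hc4 : (Real.log 2)^4 ≤ 0.24 := by
    have e : (Real.log 2)^4 = (Real.log 2*Real.log 2)*(Real.log 2*Real.log 2) := by ring
    rw [e]
    linarith
  have hx43 : x^4 ≤ x^3 := by
    nlinarith [mul_nonneg (pow_nonneg hx0.le 3) (sub_nonneg.mpr hx1.le)]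
  have hu4 : u^4 ≤ 0.24*x^3 := by
    have e1 : u^4 = (Real.log 2)^4 * x^4 := by rw [hu_def]; ring
    have e2 : (Real.log 2)^4 * x^4 ≤ 0.24 * x^4 :=
      mul_le_mul_of_nonneg_right hc4 (by positivity)
    nlinarith
  have hmid : u^7/30 ≤ (1/100)*(x^3*u^3) := by
    have e2 : u^3*u^4 ≤ u^3*(0.24*x^3) := mul_le_mul_of_nonneg_left hu4 (by positivity)
    nlinarith [pow_pos hu0 3, pow_pos hx0 3]
  have hbig : (1/100)*(x^3*u^3)
      ≤ (1/2)*Real.exp (q x)*(q1 x^3 + 3*q1 x*q2 x + q3 x)*(x^3*(E x - 1)^3) := by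
    have m1 : 2*(1/100) ≤ Real.exp (q x)*(q1 x^3 + 3*q1 x*q2 x + q3 x) := by
      have := mul_le_mul hp hS (by norm_num) (by linarith : (0:ℝ) ≤ Real.exp (q x))
      linarith
    have m2 : x^3*u^3 ≤ x^3*(E x - 1)^3 :=
      mul_le_mul_of_nonneg_left hcube2 (by positivity)
    have hx3u3 : (0:ℝ) ≤ x^3*u^3 := by positivity
    nlinarith [m1, m2, hx3u3]
  have hden : (0:ℝ) < x^3*(E x - 1)^3 :=
    mul_pos (pow_pos hx0 3) (pow_pos (by linarith) 3)
  have hfrm : f3 x = (2*(E x - 1)^3 - (Real.log 2)^3*x^3*(E x*(E x + 1))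
      - (1/2)*Real.exp (q x)*(q1 x^3 + 3*q1 x*q2 x + q3 x)*(x^3*(E x - 1)^3))
      / (x^3*(E x - 1)^3) := by
    simp only [f3]
    have hEne : E x - 1 ≠ 0 := by linarith
    field_simp
  rw [hfrm]
  apply div_nonpos_of_nonpos_of_nonneg _ hden.le
  have hueq : (Real.log 2)^3*x^3 = u^3 := by rw [hu_def]; ring
  rw [show 2*(E x - 1)^3 - (Real.log 2)^3*x^3*(E x*(E x + 1))
      - (1/2)*Real.exp (q x)*(q1 x^3 + 3*q1 x*q2 x + q3 x)*(x^3*(E x - 1)^3)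
      = 2*(E x - 1)^3 - u^3*(E x*(E x + 1))
      - (1/2)*Real.exp (q x)*(q1 x^3 + 3*q1 x*q2 x + q3 x)*(x^3*(E x - 1)^3) from by rw [← hueq]]
  linarith [hA, hmid, hbig]

lemma f2_nonneg {x : ℝ} (hx0 : 0 < x) (hx1 : x < 1) : 0 ≤ f2 x := by
  have hcont : ContinuousOn f2 (Icc x 1) := by
    intro y hy
    have hy0 : 0 < y := lt_of_lt_of_le hx0 hy.1
    exact ((hasDerivAt_f2 hy0).continuousAt).continuousWithinAt
  have hanti : AntitoneOn f2 (Icc x 1) := by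
    apply antitoneOn_of_deriv_nonpos (convex_Icc x 1) hcont
    · intro y hy
      rw [interior_Icc] at hy
      have hy0 : 0 < y := lt_trans hx0 hy.1
      exact ((hasDerivAt_f2 hy0).differentiableAt).differentiableWithinAt
    · intro y hy
      rw [interior_Icc] at hy
      have hy0 : 0 < y := lt_trans hx0 hy.1
      rw [(hasDerivAt_f2 hy0).deriv]
      exact f3_nonpos hy0 hy.2
  have h := hanti (left_mem_Icc.mpr hx1.le) (right_mem_Icc.mpr hx1.le) hx1.le
  rw [f2_one] at h
  exact h

lemma f1_nonpos {x : ℝ} (hx0 : 0 < x) (hx1 : x < 1) : f1 x ≤ 0 := by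
  have hcont : ContinuousOn f1 (Icc x 1) := by
    intro y hy
    have hy0 : 0 < y := lt_of_lt_of_le hx0 hy.1
    exact ((hasDerivAt_f1 hy0).continuousAt).continuousWithinAt
  have hmono : MonotoneOn f1 (Icc x 1) := by
    apply monotoneOn_of_deriv_nonneg (convex_Icc x 1) hcont
    · intro y hy
      rw [interior_Icc] at hy
      have hy0 : 0 < y := lt_trans hx0 hy.1
      exact ((hasDerivAt_f1 hy0).differentiableAt).differentiableWithinAt
    · intro y hy
      rw [interior_Icc] at hy
      have hy0 : 0 < y := lt_trans hx0 hy.1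
      rw [(hasDerivAt_f1 hy0).deriv]
      exact f2_nonneg hy0 hy.2
  have h := hmono (left_mem_Icc.mpr hx1.le) (right_mem_Icc.mpr hx1.le) hx1.le
  rw [f1_one] at h
  exact h

lemma f_nonneg {x : ℝ} (hx0 : 0 < x) (hx1 : x < 1) : 0 ≤ f x := by
  have hcont : ContinuousOn f (Icc x 1) := by
    intro y hy
    have hy0 : 0 < y := lt_of_lt_of_le hx0 hy.1
    exact ((hasDerivAt_f hy0).continuousAt).continuousWithinAt
  have hanti : AntitoneOn f (Icc x 1) := by
    apply antitoneOn_of_deriv_nonpos (convex_Icc x 1) hcont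
    · intro y hy
      rw [interior_Icc] at hy
      have hy0 : 0 < y := lt_trans hx0 hy.1
      exact ((hasDerivAt_f hy0).differentiableAt).differentiableWithinAt
    · intro y hy
      rw [interior_Icc] at hy
      have hy0 : 0 < y := lt_trans hx0 hy.1
      rw [(hasDerivAt_f hy0).deriv]
      exact f1_nonpos hy0 hy.2
  have h := hanti (left_mem_Icc.mpr hx1.le) (right_mem_Icc.mpr hx1.le) hx1.le
  rw [f_one] at h
  exact h

end TAaux

theorem T_alpha_inequalities (α : ℝ) (hα : α ∈ Set.Ioo (0:ℝ) 1) :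
    -Real.log (2 ^ α - 1)
        ≥ -Real.log α + (1/2) * (α+1) ^ ((α+1)/α) - (α+1) ∧
      -Real.log α + (1/2) * (α+1) ^ ((α+1)/α) - (α+1)
        ≥ -Real.log (Real.sin (Real.pi*α/2)) + (1/2) * (α+1) ^ ((α+1)/α) - (α+1) := by
  obtain ⟨h0, h1⟩ := hα
  have hxne : α ≠ 0 := h0.ne'
  constructor
  · -- first inequality, from f_nonneg
    have hf := TAaux.f_nonneg h0 h1
    have hE : (2:ℝ) ^ α = TAaux.E α := by
      rw [Real.rpow_def_of_pos (by norm_num : (0:ℝ) < 2)]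
      simp only [TAaux.E]
      ring_nf
    have hq : (α+1) ^ ((α+1)/α) = Real.exp (TAaux.q α) := by
      rw [Real.rpow_def_of_pos (by linarith : (0:ℝ) < α+1)]
      simp only [TAaux.q]
      congr 1
      have : (1:ℝ) + 1/α = (α+1)/α := by field_simp
      rw [show (1:ℝ)+α = α+1 by ring, this]
      ring
    simp only [TAaux.f] at hf
    rw [hE, hq]
    linarith [hf]
  · -- second inequality: sin (πα/2) ≥ α
    have hsin : α ≤ Real.sin (Real.pi*α/2) := by
      have h := Real.mul_le_sin (x := Real.pi*α/2) (by positivity)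
        (by nlinarith [Real.pi_pos])
      have hπ : Real.pi ≠ 0 := Real.pi_ne_zero
      calc α = 2/Real.pi*(Real.pi*α/2) := by field_simp
      _ ≤ Real.sin (Real.pi*α/2) := h
    have hlog : Real.log α ≤ Real.log (Real.sin (Real.pi*α/2)) :=
      Real.log_le_log h0 hsin
    linarith
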